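/- Let f be α-strongly convex and β-smooth with κ = β/α and minimizer x*. Then gradient descent x_{t+1} = x_t - (1/β)∇f(x_t) satisfies f(x_T) - f(x*) ≤ (1 - 1/κ)^T (f(x₀) - f(x*)) ≤ e^{-T/κ}(f(x₀) - f(x*)). -/

import Mathlib

open RealInnerProductSpace

/-- Gradient descent on a well-conditioned function: linear convergence. -/
theorem gd_well_conditioned_convergence {n : ℕ} (T : ℕ)
    (f : EuclideanSpace ℝ (Fin n) → ℝ)
    (f' : EuclideanSpace ℝ (Fin n) → EuclideanSpace ℝ (Fin n))
    (hdiff : ∀ x, HasGradientAt f (f' x) x)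
    (α β : ℝ) (hα : 0 < α) (hβ : 0 < β)
    (hsc : ∀ x y, f y ≥ f x + ⟪f' x, y - x⟫ + α / 2 * ‖y - x‖ ^ 2)
    (hsmooth : ∀ x y, f y ≤ f x + ⟪f' x, y - x⟫ + β / 2 * ‖y - x‖ ^ 2)
    (κ : ℝ) (hκ : κ = β / α)
    (xstar : EuclideanSpace ℝ (Fin n)) (hmin : ∀ y, f xstar ≤ f y)
    (x : ℕ → EuclideanSpace ℝ (Fin n))
    (hupdate : ∀ t, x (t + 1) = x t - (1 / β) • f' (x t)) :
    f (x T) - f xstar ≤ (1 - 1 / κ) ^ T * (f (x 0) - f xstar) ∧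
    (1 - 1 / κ) ^ T * (f (x 0) - f xstar)
      ≤ Real.exp (-(T : ℝ) / κ) * (f (x 0) - f xstar) := by
  have hD : 0 ≤ f (x 0) - f xstar := sub_nonneg.2 (hmin _)
  have hκα : 1 / κ = α / β := by rw [hκ]; field_simp
  rcases Nat.eq_zero_or_pos n with hn | hn
  · subst hn
    haveI : Subsingleton (EuclideanSpace ℝ (Fin 0)) := by
      constructor
      intro a b
      ext i
      exact i.elim0
    have h0 : x T = xstar := Subsingleton.elim _ _
    have h1 : x 0 = xstar := Subsingleton.elim _ _
    rw [h0, h1]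
    constructor <;> simp
  · -- α ≤ β from two distinct points
    have hab : α ≤ β := by
      set y : EuclideanSpace ℝ (Fin n) := EuclideanSpace.single ⟨0, hn⟩ 1 with hy
      have h1 := hsc 0 y
      have h2 := hsmooth 0 y
      have hny : ‖y - 0‖ ^ 2 = 1 := by
        rw [sub_zero, hy, EuclideanSpace.norm_single]
        simp
      rw [hny] at h1 h2
      nlinarith
    have hstep : ∀ t, f (x (t + 1)) - f xstar ≤ (1 - α / β) * (f (x t) - f xstar) := by
      intro t
      set g := f' (x t) with hg
      have hsm := hsmooth (x t) (x (t + 1))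
      rw [hupdate t] at hsm ⊢
      have hvec : x t - (1 / β) • g - x t = -((1 / β) • g) := by abel
      have e1 : ⟪g, x t - (1 / β) • g - x t⟫ = -(1 / β) * ‖g‖ ^ 2 := by
        rw [hvec, inner_neg_right, real_inner_smul_right, real_inner_self_eq_norm_sq]
        ring
      have e2 : ‖x t - (1 / β) • g - x t‖ ^ 2 = (1 / β) ^ 2 * ‖g‖ ^ 2 := by
        rw [hvec, norm_neg, norm_smul, mul_pow, Real.norm_eq_abs,
          abs_of_pos (by positivity : (0:ℝ) < 1 / β)]
      rw [e1, e2] at hsm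
      -- descent: f(x_{t+1}) ≤ f(x t) - 1/(2β) ‖g‖²
      have hdesc : f (x t - (1 / β) • g) ≤ f (x t) - 1 / (2 * β) * ‖g‖ ^ 2 := by
        have : -(1 / β) * ‖g‖ ^ 2 + β / 2 * ((1 / β) ^ 2 * ‖g‖ ^ 2)
            = -(1 / (2 * β)) * ‖g‖ ^ 2 := by field_simp; ring
        nlinarith [hsm]
      -- PL inequality: ‖g‖² ≥ 2α (f(x t) - f*)
      have hpl : 2 * α * (f (x t) - f xstar) ≤ ‖g‖ ^ 2 := by
        have hs := hsc (x t) xstar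
        have hnn : (0:ℝ) ≤ ‖α • (xstar - x t) + g‖ ^ 2 := sq_nonneg _
        have hexp : ‖α • (xstar - x t) + g‖ ^ 2
            = α ^ 2 * ‖xstar - x t‖ ^ 2 + 2 * (α * ⟪g, xstar - x t⟫) + ‖g‖ ^ 2 := by
          rw [norm_add_sq_real, real_inner_smul_left, real_inner_comm, norm_smul, mul_pow,
            Real.norm_eq_abs, abs_of_pos hα]
        rw [hexp] at hnn
        have hs' : ⟪g, xstar - x t⟫ + α / 2 * ‖xstar - x t‖ ^ 2 ≤ f xstar - f (x t) := by
          rw [hg]; linarith [hs]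
        have hs2 := mul_le_mul_of_nonneg_left hs' hα.le
        nlinarith [hnn, hs2]
      -- combine
      have h3 : α / β * (f (x t) - f xstar) ≤ 1 / (2 * β) * ‖g‖ ^ 2 := by
        have h4 : (0:ℝ) ≤ 1 / (2 * β) := by positivity
        calc α / β * (f (x t) - f xstar) = 1 / (2 * β) * (2 * α * (f (x t) - f xstar)) := by
              field_simp
          _ ≤ 1 / (2 * β) * ‖g‖ ^ 2 := mul_le_mul_of_nonneg_left hpl h4
      have : (1 - α / β) * (f (x t) - f xstar)
          = (f (x t) - f xstar) - α / β * (f (x t) - f xstar) := by ring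
      linarith
    have hc0 : (0:ℝ) ≤ 1 - α / β := by
      have : α / β ≤ 1 := (div_le_one hβ).2 hab
      linarith
    have main : ∀ t, f (x t) - f xstar ≤ (1 - α / β) ^ t * (f (x 0) - f xstar) := by
      intro t
      induction t with
      | zero => simp
      | succ t ih =>
        calc f (x (t + 1)) - f xstar ≤ (1 - α / β) * (f (x t) - f xstar) := hstep t
          _ ≤ (1 - α / β) * ((1 - α / β) ^ t * (f (x 0) - f xstar)) :=
              mul_le_mul_of_nonneg_left ih hc0
          _ = (1 - α / β) ^ (t + 1) * (f (x 0) - f xstar) := by ring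
    constructor
    · rw [hκα]
      exact main T
    · have h1 : 1 - 1 / κ ≤ Real.exp (-(1 / κ)) := by
        have := Real.add_one_le_exp (-(1 / κ))
        linarith
      have h0 : (0:ℝ) ≤ 1 - 1 / κ := by rw [hκα]; exact hc0
      have hpow : (1 - 1 / κ) ^ T ≤ Real.exp (-(1 / κ)) ^ T := pow_le_pow_left₀ h0 h1 T
      have hexp : Real.exp (-(1 / κ)) ^ T = Real.exp (-(T : ℝ) / κ) := by
        rw [← Real.exp_nat_mul]
        ring_nf
      rw [hexp] at hpow
      exact mul_le_mul_of_nonneg_right hpow hD
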